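/- For any rooted binary phylogenetic tree T on a taxon set X evolving under the symmetric 4-state model N_4 (not necessarily ultrametric), P_{αβγ}(X) ≥ P_{βγδ}(X), i.e. P(MP(f,T) = {α,β,γ} | ρ = α) ≥ P(MP(f,T) = {β,γ,δ} | ρ = α). -/

import Mathlib

/-- A rooted binary phylogenetic tree: a `leaf` is a single taxon, and the
root of `node p₁ p₂ L R` has the roots of `L` and `R` as its two children,
attached by edges carrying one-specific-change probabilities `p₁` and `p₂`. -/
inductive PhyloTree : Type
  | leaf : PhyloTree
  | node (p₁ p₂ : ℝ) (L R : PhyloTree) : PhyloTree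

namespace PhyloTree

/-- The number of leaves (taxa) of the tree. -/
def nLeaves : PhyloTree → ℕ
  | leaf => 1
  | node _ _ L R => nLeaves L + nLeaves R

/-- All edge substitution probabilities of the tree lie in `[0, 1/4]`. -/
def valid : PhyloTree → Prop
  | leaf => True
  | node p₁ p₂ L R => 0 ≤ p₁ ∧ p₁ ≤ 1/4 ∧ 0 ≤ p₂ ∧ p₂ ≤ 1/4 ∧ valid L ∧ valid R

end PhyloTree

/-- Transition probabilities of the symmetric 4-state model `N₄`: conditional
on the upper endpoint of an edge with substitution probability `q` being in
state `a`, the lower endpoint is in each specific state `b ≠ a` with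
probability `q`, and in state `a` with probability `1 - 3q`. -/
noncomputable def trans4 (q : ℝ) (a b : Fin 4) : ℝ := if a = b then 1 - 3*q else q

/-- `charProb4 t a f` is the probability, conditional on the root of `t`
being in state `a`, that the leaves of `t` (read from left to right) are in
the states recorded by the list `f`.  States evolve independently along the
edges according to `trans4`. -/
noncomputable def charProb4 : PhyloTree → Fin 4 → List (Fin 4) → ℝ
  | .leaf, a, f => if f = [a] then 1 else 0
  | .node p₁ p₂ L R, a, f =>
      ∑ b : Fin 4, ∑ c : Fin 4, trans4 p₁ a b * trans4 p₂ a c *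
        charProb4 L b (f.take L.nLeaves) * charProb4 R c (f.drop L.nLeaves)

/-- Fitch's parsimony operation: `A ∩ B` if it is nonempty, `A ∪ B` otherwise. -/
def fitchOp {k : ℕ} (A B : Finset (Fin k)) : Finset (Fin k) :=
  if (A ∩ B).Nonempty then A ∩ B else A ∪ B

/-- The set `MP(f,T)` assigned to the root of `t` by the Fitch algorithm when
the leaves carry the character (list of leaf states) `f`. -/
def fitchSet4 : PhyloTree → List (Fin 4) → Finset (Fin 4)
  | .leaf, [b] => {b}
  | .leaf, _ => ∅
  | .node _ _ L R, f =>
      fitchOp (fitchSet4 L (f.take L.nLeaves)) (fitchSet4 R (f.drop L.nLeaves))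

/-- `rootProb4 t a R = P(MP(f,T) = R ∣ root state = a)`. -/
noncomputable def rootProb4 (t : PhyloTree) (a : Fin 4) (R : Finset (Fin 4)) : ℝ :=
  ∑ f : Fin t.nLeaves → Fin 4,
    if fitchSet4 t (List.ofFn f) = R then charProb4 t a (List.ofFn f) else 0

/-- The reconstruction accuracy
`RA(X) = ∑_{R ⊆ A, α ∈ R} (1/|R|) · P(MP(f,T) = R ∣ ρ = α)`, with `α := 0`. -/
noncomputable def RA4 (t : PhyloTree) : ℝ :=
  ∑ R : Finset (Fin 4),
    if (0 : Fin 4) ∈ R then (R.card : ℝ)⁻¹ * rootProb4 t 0 R else 0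

/-- `ultra4 t p`: the tree `t` is ultrametric, and the probability of one
specific state change from the root to any leaf is `p` (under `N₄`, the
one-specific-change probabilities compose along a path as
`p₁ ∘ q₁ = p₁ + q₁ - 4·p₁·q₁`). -/
def ultra4 : PhyloTree → ℝ → Prop
  | .leaf, p => p = 0
  | .node p₁ p₂ L R, p => ∃ q₁ q₂, ultra4 L q₁ ∧ ultra4 R q₂ ∧
      p = p₁ + q₁ - 4*p₁*q₁ ∧ p = p₂ + q₂ - 4*p₂*q₂


section Aux

open Finset

lemma trans4_nonneg {q : ℝ} (h0 : 0 ≤ q) (h1 : q ≤ 1/4) (a b : Fin 4) : 0 ≤ trans4 q a b := by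
  unfold trans4; split <;> linarith

lemma trans4_perm (q : ℝ) (σ : Equiv.Perm (Fin 4)) (a b : Fin 4) :
    trans4 q (σ a) (σ b) = trans4 q a b := by
  unfold trans4; simp [σ.injective.eq_iff]

lemma sum_fiber {ι κ : Type*} [Fintype ι] [Fintype κ] [DecidableEq κ]
    (g : ι → κ) (φ : κ → ℝ) (w : ι → ℝ) :
    ∑ A : κ, φ A * (∑ i : ι, if g i = A then w i else 0) = ∑ i : ι, φ (g i) * w i := by
  simp_rw [Finset.mul_sum, mul_ite, mul_zero]
  rw [Finset.sum_comm]
  congr 1; funext i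
  rw [Finset.sum_ite_eq Finset.univ (g i) (fun A => φ A * w i)]
  simp

lemma charProb4_nonneg : ∀ (t : PhyloTree), t.valid → ∀ (a : Fin 4) (f : List (Fin 4)),
    0 ≤ charProb4 t a f := by
  intro t
  induction t with
  | leaf => intro _ a f; unfold charProb4; split <;> norm_num
  | node p₁ p₂ L R ihL ihR =>
    intro hv a f
    obtain ⟨h1, h2, h3, h4, hL, hR⟩ := hv
    unfold charProb4
    refine Finset.sum_nonneg fun b _ => Finset.sum_nonneg fun c _ => ?_
    have := trans4_nonneg h1 h2 a b
    have := trans4_nonneg h3 h4 a c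
    have := ihL hL b (f.take L.nLeaves)
    have := ihR hR c (f.drop L.nLeaves)
    positivity

lemma rootProb4_nonneg (t : PhyloTree) (hv : t.valid) (a : Fin 4) (R : Finset (Fin 4)) :
    0 ≤ rootProb4 t a R := by
  refine Finset.sum_nonneg fun f _ => ?_
  split
  · exact charProb4_nonneg t hv a _
  · exact le_refl 0

lemma charProb4_map : ∀ (t : PhyloTree) (σ : Equiv.Perm (Fin 4)) (a : Fin 4) (f : List (Fin 4)),
    charProb4 t (σ a) (f.map σ) = charProb4 t a f := by
  intro t
  induction t with
  | leaf =>
    intro σ a f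
    unfold charProb4
    congr 1
    simp only [eq_iff_iff]
    constructor
    · intro h
      have : (f.map σ).map σ.symm = [σ a].map σ.symm := by rw [h]
      simpa using this
    · intro h; rw [h]; simp
  | node p₁ p₂ L R ihL ihR =>
    intro σ a f
    unfold charProb4
    rw [← Equiv.sum_comp σ (fun b => _)]
    congr 1; funext b
    rw [← Equiv.sum_comp σ (fun c => _)]
    congr 1; funext c
    rw [trans4_perm, trans4_perm, ← List.map_take, ← List.map_drop, ihL, ihR]

lemma fitchOp_image {σ : Equiv.Perm (Fin 4)} (A B : Finset (Fin 4)) :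
    fitchOp (A.image σ) (B.image σ) = (fitchOp A B).image σ := by
  unfold fitchOp
  rw [← Finset.image_inter _ _ σ.injective]
  by_cases h : (A ∩ B).Nonempty
  · rw [if_pos (h.image σ), if_pos h]
  · rw [if_neg, if_neg h, Finset.image_union]
    simpa using h

lemma fitchSet4_map : ∀ (t : PhyloTree) (σ : Equiv.Perm (Fin 4)) (f : List (Fin 4)),
    fitchSet4 t (f.map σ) = (fitchSet4 t f).image σ := by
  intro t
  induction t with
  | leaf =>
    intro σ f
    match f with
    | [] => simp [fitchSet4]
    | [x] => simp [fitchSet4]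
    | x :: y :: l => simp [fitchSet4]
  | node p₁ p₂ L R ihL ihR =>
    intro σ f
    show fitchOp _ _ = _
    rw [← List.map_take, ← List.map_drop, ihL, ihR, fitchOp_image]
    rfl

lemma rootProb4_perm (t : PhyloTree) (σ : Equiv.Perm (Fin 4)) (a : Fin 4) (R : Finset (Fin 4)) :
    rootProb4 t (σ a) (R.image σ) = rootProb4 t a R := by
  unfold rootProb4
  refine Fintype.sum_equiv (Equiv.piCongrRight fun _ => (σ.symm : Equiv.Perm (Fin 4))) _ _
    fun f => ?_
  have hofn : List.ofFn ((Equiv.piCongrRight fun _ => (σ.symm : Equiv.Perm (Fin 4))) f)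
      = (List.ofFn f).map σ.symm := by
    rw [List.map_ofFn]; rfl
  rw [hofn, fitchSet4_map]
  have hval : charProb4 t a ((List.ofFn f).map ⇑σ.symm) = charProb4 t (σ a) (List.ofFn f) := by
    rw [← charProb4_map t σ a ((List.ofFn f).map ⇑σ.symm), List.map_map]
    simp
  rw [hval]
  congr 1
  simp only [eq_iff_iff]
  constructor
  · intro h
    rw [h, Finset.image_image]
    simp
  · intro h
    rw [← h, Finset.image_image]
    simp


/-- Edge-transformed root-set distribution: the tree `t` hangs below an edge
with substitution probability `p`. -/
noncomputable def ep (p : ℝ) (t : PhyloTree) (a : Fin 4) (A : Finset (Fin 4)) : ℝ :=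
  ∑ b : Fin 4, trans4 p a b * rootProb4 t b A

lemma ep_nonneg {p : ℝ} (h0 : 0 ≤ p) (h1 : p ≤ 1/4) {t : PhyloTree} (hv : t.valid)
    (a : Fin 4) (A : Finset (Fin 4)) : 0 ≤ ep p t a A :=
  Finset.sum_nonneg fun b _ =>
    mul_nonneg (trans4_nonneg h0 h1 a b) (rootProb4_nonneg t hv b A)

lemma ep_perm (p : ℝ) (t : PhyloTree) (σ : Equiv.Perm (Fin 4)) (a : Fin 4)
    (A : Finset (Fin 4)) : ep p t (σ a) (A.image σ) = ep p t a A := by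
  unfold ep
  rw [← Equiv.sum_comp σ (fun b => trans4 p (σ a) b * rootProb4 t b (A.image σ))]
  congr 1; funext b
  rw [trans4_perm, rootProb4_perm]

lemma image_swap_eq {a b : Fin 4} {A : Finset (Fin 4)} (h : a ∈ A ↔ b ∈ A) :
    A.image (Equiv.swap a b) = A := by
  ext x
  simp only [Finset.mem_image]
  constructor
  · rintro ⟨y, hy, rfl⟩
    rcases eq_or_ne y a with rfl | hya
    · rw [Equiv.swap_apply_left]; exact h.mp hy
    rcases eq_or_ne y b with rfl | hyb
    · rw [Equiv.swap_apply_right]; exact h.mpr hy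
    · rwa [Equiv.swap_apply_of_ne_of_ne hya hyb]
  · intro hx
    refine ⟨Equiv.swap a b x, ?_, Equiv.swap_apply_self a b x⟩
    rcases eq_or_ne x a with rfl | hxa
    · rw [Equiv.swap_apply_left]; exact h.mp hx
    rcases eq_or_ne x b with rfl | hxb
    · rw [Equiv.swap_apply_right]; exact h.mpr hx
    · rwa [Equiv.swap_apply_of_ne_of_ne hxa hxb]

lemma ep_swap_eq (p : ℝ) (t : PhyloTree) {a b : Fin 4} {A : Finset (Fin 4)}
    (h : a ∈ A ↔ b ∈ A) : ep p t a A = ep p t b A := by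
  have := ep_perm p t (Equiv.swap a b) a A
  rwa [Equiv.swap_apply_left, image_swap_eq h, eq_comm] at this

lemma ep_diff (p : ℝ) (t : PhyloTree) {a b : Fin 4} (hab : a ≠ b) (A : Finset (Fin 4)) :
    ep p t a A - ep p t b A = (1 - 4*p) * (rootProb4 t a A - rootProb4 t b A) := by
  unfold ep
  rw [← Finset.sum_sub_distrib]
  have key : ∀ c : Fin 4, trans4 p a c * rootProb4 t c A - trans4 p b c * rootProb4 t c A
      = (if c = a then (1 - 4*p) * rootProb4 t c A else 0)
        - (if c = b then (1 - 4*p) * rootProb4 t c A else 0) := by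
    intro c
    unfold trans4
    split_ifs <;> try ring
    all_goals (exfalso; subst_vars; simp_all)
  rw [Finset.sum_congr rfl fun c _ => key c, Finset.sum_sub_distrib,
    Finset.sum_ite_eq' Finset.univ a (fun c => (1 - 4*p) * rootProb4 t c A),
    Finset.sum_ite_eq' Finset.univ b (fun c => (1 - 4*p) * rootProb4 t c A)]
  simp only [Finset.mem_univ, if_pos]
  ring

lemma ep_le {p : ℝ} (h0 : 0 ≤ p) (h1 : p ≤ 1/4) {t : PhyloTree} (hv : t.valid)
    (hinv : ∀ (R : Finset (Fin 4)) (a b : Fin 4), a ∈ R → b ∉ R →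
      rootProb4 t b R ≤ rootProb4 t a R)
    {a b : Fin 4} {A : Finset (Fin 4)} (h : b ∈ A → a ∈ A) :
    ep p t b A ≤ ep p t a A := by
  rcases eq_or_ne a b with rfl | hab
  · exact le_refl _
  by_cases hbA : b ∈ A
  · exact le_of_eq (ep_swap_eq p t (iff_of_true (h hbA) hbA)).symm
  by_cases haA : a ∈ A
  · have hP := hinv A a b haA hbA
    have hd := ep_diff p t hab A
    nlinarith
  · exact le_of_eq (ep_swap_eq p t (iff_of_false haA hbA)).symm

lemma sum_fiber2 {ι₁ ι₂ κ₁ κ₂ : Type*} [Fintype ι₁] [Fintype ι₂] [Fintype κ₁] [Fintype κ₂]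
    [DecidableEq κ₁] [DecidableEq κ₂]
    (g₁ : ι₁ → κ₁) (g₂ : ι₂ → κ₂) (φ : κ₁ → κ₂ → ℝ) (w₁ : ι₁ → ℝ) (w₂ : ι₂ → ℝ) :
    ∑ A : κ₁, ∑ B : κ₂, φ A B * ((∑ i : ι₁, if g₁ i = A then w₁ i else 0) *
        (∑ j : ι₂, if g₂ j = B then w₂ j else 0))
      = ∑ i : ι₁, ∑ j : ι₂, φ (g₁ i) (g₂ j) * (w₁ i * w₂ j) := by
  have step1 : ∀ A : κ₁,
      (∑ B : κ₂, φ A B * ((∑ i : ι₁, if g₁ i = A then w₁ i else 0) *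
        (∑ j : ι₂, if g₂ j = B then w₂ j else 0)))
      = ∑ j : ι₂, (φ A (g₂ j) * (∑ i : ι₁, if g₁ i = A then w₁ i else 0)) * w₂ j := by
    intro A
    have h := sum_fiber g₂ (fun B => φ A B * (∑ i : ι₁, if g₁ i = A then w₁ i else 0)) w₂
    calc _ = ∑ B : κ₂, (φ A B * (∑ i : ι₁, if g₁ i = A then w₁ i else 0)) *
          (∑ j : ι₂, if g₂ j = B then w₂ j else 0) := by
          congr 1; funext B; ring
      _ = _ := h
  have step2 : ∀ j : ι₂,
      (∑ A : κ₁, (φ A (g₂ j) * (∑ i : ι₁, if g₁ i = A then w₁ i else 0)) * w₂ j)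
      = ∑ i : ι₁, (φ (g₁ i) (g₂ j) * w₂ j) * w₁ i := by
    intro j
    have h := sum_fiber g₁ (fun A => φ A (g₂ j) * w₂ j) w₁
    calc ∑ A : κ₁, (φ A (g₂ j) * (∑ i : ι₁, if g₁ i = A then w₁ i else 0)) * w₂ j
        = ∑ A : κ₁, (φ A (g₂ j) * w₂ j) * (∑ i : ι₁, if g₁ i = A then w₁ i else 0) := by
          apply Finset.sum_congr rfl; intro A _; ring
      _ = _ := h
  rw [Finset.sum_congr rfl fun A _ => step1 A, Finset.sum_comm,
    Finset.sum_congr rfl fun j _ => step2 j, Finset.sum_comm]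
  apply Finset.sum_congr rfl; intro i _
  apply Finset.sum_congr rfl; intro j _
  ring


lemma rootProb4_leaf (a : Fin 4) (R : Finset (Fin 4)) :
    rootProb4 .leaf a R = if {a} = R then 1 else 0 := by
  unfold rootProb4
  show (∑ f : Fin 1 → Fin 4,
      if fitchSet4 .leaf (List.ofFn f) = R then charProb4 .leaf a (List.ofFn f) else 0) = _
  rw [← Equiv.sum_comp (Equiv.funUnique (Fin 1) (Fin 4)).symm
    (fun f : Fin 1 → Fin 4 =>
      if fitchSet4 .leaf (List.ofFn f) = R then charProb4 .leaf a (List.ofFn f) else 0)]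
  have hofn : ∀ x : Fin 4, List.ofFn ((Equiv.funUnique (Fin 1) (Fin 4)).symm x) = [x] := by
    intro x; simp
  simp only [hofn]
  have hval : ∀ x : Fin 4,
      (if fitchSet4 PhyloTree.leaf [x] = R then charProb4 PhyloTree.leaf a [x] else 0)
      = if x = a then (if ({a} : Finset (Fin 4)) = R then (1:ℝ) else 0) else 0 := by
    intro x
    show (if ({x} : Finset (Fin 4)) = R then (if [x] = [a] then (1:ℝ) else 0) else 0) = _
    by_cases hx : x = a
    · subst hx; simp
    · simp [hx]
  rw [Finset.sum_congr rfl fun x _ => hval x,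
    Finset.sum_ite_eq' Finset.univ a (fun _ => if ({a} : Finset (Fin 4)) = R then (1:ℝ) else 0)]
  simp

lemma rootProb4_node (p₁ p₂ : ℝ) (L R : PhyloTree) (a : Fin 4) (S : Finset (Fin 4)) :
    rootProb4 (.node p₁ p₂ L R) a S =
      ∑ A : Finset (Fin 4), ∑ B : Finset (Fin 4),
        if fitchOp A B = S then ep p₁ L a A * ep p₂ R a B else 0 := by
  classical
  set m := L.nLeaves with hm
  set n := R.nLeaves with hn
  let e : ((Fin m → Fin 4) × (Fin n → Fin 4)) ≃ (Fin (m + n) → Fin 4) :=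
    (Equiv.sumArrowEquivProdArrow (Fin m) (Fin n) (Fin 4)).symm.trans
      (Equiv.arrowCongr finSumFinEquiv (Equiv.refl (Fin 4)))
  have hofn : ∀ (u : Fin m → Fin 4) (v : Fin n → Fin 4),
      List.ofFn (e (u, v)) = List.ofFn u ++ List.ofFn v := by
    intro u v
    rw [List.ofFn_add]
    congr 1
    · exact congrArg List.ofFn (funext fun i => by
        simp [e, Equiv.sumArrowEquivProdArrow, Equiv.arrowCongr]
        rw [show Fin.castLE (Nat.le_add_right m n) i = Fin.castAdd n i from rfl]
        simp)
    · exact congrArg List.ofFn (funext fun j => by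
        simp [e, Equiv.sumArrowEquivProdArrow, Equiv.arrowCongr])
  have htake : ∀ (u : Fin m → Fin 4) (v : Fin n → Fin 4),
      (List.ofFn u ++ List.ofFn v).take m = List.ofFn u := by
    intro u v
    have h : (List.ofFn u ++ List.ofFn v).take (List.ofFn u).length = List.ofFn u := List.take_left
    rwa [List.length_ofFn] at h
  have hdrop : ∀ (u : Fin m → Fin 4) (v : Fin n → Fin 4),
      (List.ofFn u ++ List.ofFn v).drop m = List.ofFn v := by
    intro u v
    have h : (List.ofFn u ++ List.ofFn v).drop (List.ofFn u).length = List.ofFn v := List.drop_left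
    rwa [List.length_ofFn] at h
  have hepL : ∀ A : Finset (Fin 4), ep p₁ L a A = ∑ u : Fin m → Fin 4,
      if fitchSet4 L (List.ofFn u) = A then
        (∑ b : Fin 4, trans4 p₁ a b * charProb4 L b (List.ofFn u)) else 0 := by
    intro A
    unfold ep rootProb4
    simp_rw [Finset.mul_sum, mul_ite, mul_zero]
    rw [Finset.sum_comm]
    apply Finset.sum_congr rfl; intro u _
    by_cases h : fitchSet4 L (List.ofFn u) = A <;> simp [h]
  have hepR : ∀ B : Finset (Fin 4), ep p₂ R a B = ∑ v : Fin n → Fin 4,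
      if fitchSet4 R (List.ofFn v) = B then
        (∑ c : Fin 4, trans4 p₂ a c * charProb4 R c (List.ofFn v)) else 0 := by
    intro B
    unfold ep rootProb4
    simp_rw [Finset.mul_sum, mul_ite, mul_zero]
    rw [Finset.sum_comm]
    apply Finset.sum_congr rfl; intro v _
    by_cases h : fitchSet4 R (List.ofFn v) = B <;> simp [h]
  have hfib := sum_fiber2 (fun u : Fin m → Fin 4 => fitchSet4 L (List.ofFn u))
      (fun v : Fin n → Fin 4 => fitchSet4 R (List.ofFn v))
      (fun A B => if fitchOp A B = S then (1:ℝ) else 0)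
      (fun u => ∑ b : Fin 4, trans4 p₁ a b * charProb4 L b (List.ofFn u))
      (fun v => ∑ c : Fin 4, trans4 p₂ a c * charProb4 R c (List.ofFn v))
  calc rootProb4 (.node p₁ p₂ L R) a S
      = ∑ u : Fin m → Fin 4, ∑ v : Fin n → Fin 4,
          if fitchOp (fitchSet4 L (List.ofFn u)) (fitchSet4 R (List.ofFn v)) = S then
            (∑ b : Fin 4, trans4 p₁ a b * charProb4 L b (List.ofFn u)) *
            (∑ c : Fin 4, trans4 p₂ a c * charProb4 R c (List.ofFn v))
          else 0 := by
        rw [rootProb4]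
        show (∑ f : Fin (m + n) → Fin 4,
          if fitchSet4 (.node p₁ p₂ L R) (List.ofFn f) = S then
            charProb4 (.node p₁ p₂ L R) a (List.ofFn f) else 0) = _
        rw [← Equiv.sum_comp e (fun f => if fitchSet4 (.node p₁ p₂ L R) (List.ofFn f) = S
          then charProb4 (.node p₁ p₂ L R) a (List.ofFn f) else 0)]
        rw [Fintype.sum_prod_type]
        apply Finset.sum_congr rfl; intro u _
        apply Finset.sum_congr rfl; intro v _
        show (if fitchSet4 (.node p₁ p₂ L R) (List.ofFn (e (u, v))) = S
          then charProb4 (.node p₁ p₂ L R) a (List.ofFn (e (u, v))) else 0) = _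
        rw [hofn u v]
        show (if fitchOp (fitchSet4 L ((List.ofFn u ++ List.ofFn v).take m))
              (fitchSet4 R ((List.ofFn u ++ List.ofFn v).drop m)) = S
            then ∑ b : Fin 4, ∑ c : Fin 4, trans4 p₁ a b * trans4 p₂ a c *
              charProb4 L b ((List.ofFn u ++ List.ofFn v).take m) *
              charProb4 R c ((List.ofFn u ++ List.ofFn v).drop m)
            else 0) = _
        rw [htake u v, hdrop u v]
        refine if_congr Iff.rfl ?_ rfl
        rw [Finset.sum_mul_sum]
        apply Finset.sum_congr rfl; intro b _
        apply Finset.sum_congr rfl; intro c _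
        ring
    _ = ∑ u : Fin m → Fin 4, ∑ v : Fin n → Fin 4,
          (if fitchOp (fitchSet4 L (List.ofFn u)) (fitchSet4 R (List.ofFn v)) = S
            then (1:ℝ) else 0) *
          ((∑ b : Fin 4, trans4 p₁ a b * charProb4 L b (List.ofFn u)) *
            (∑ c : Fin 4, trans4 p₂ a c * charProb4 R c (List.ofFn v))) := by
        apply Finset.sum_congr rfl; intro u _
        apply Finset.sum_congr rfl; intro v _
        by_cases h : fitchOp (fitchSet4 L (List.ofFn u)) (fitchSet4 R (List.ofFn v)) = S <;>
          simp [h]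
    _ = ∑ A : Finset (Fin 4), ∑ B : Finset (Fin 4),
          (if fitchOp A B = S then (1:ℝ) else 0) *
          ((∑ u : Fin m → Fin 4, if fitchSet4 L (List.ofFn u) = A then
              (∑ b : Fin 4, trans4 p₁ a b * charProb4 L b (List.ofFn u)) else 0) *
           (∑ v : Fin n → Fin 4, if fitchSet4 R (List.ofFn v) = B then
              (∑ c : Fin 4, trans4 p₂ a c * charProb4 R c (List.ofFn v)) else 0)) := hfib.symm
    _ = ∑ A : Finset (Fin 4), ∑ B : Finset (Fin 4),
          if fitchOp A B = S then ep p₁ L a A * ep p₂ R a B else 0 := by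
        apply Finset.sum_congr rfl; intro A _
        apply Finset.sum_congr rfl; intro B _
        rw [← hepL A, ← hepR B]
        by_cases h : fitchOp A B = S <;> simp [h]

theorem inv_all : ∀ (t : PhyloTree), t.valid → ∀ (R : Finset (Fin 4)) (a b : Fin 4),
    a ∈ R → b ∉ R → rootProb4 t b R ≤ rootProb4 t a R := by
  intro t
  induction t with
  | leaf =>
    intro _ R a b ha hb
    rw [rootProb4_leaf, rootProb4_leaf]
    have hb' : ¬(({b} : Finset (Fin 4)) = R) := fun h => hb (h ▸ Finset.mem_singleton_self b)
    rw [if_neg hb']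
    split <;> norm_num
  | node p₁ p₂ L R ihL ihR =>
    intro hv S a b haS hbS
    obtain ⟨h1, h2, h3, h4, hL, hR⟩ := hv
    rw [rootProb4_node, rootProb4_node]
    refine Finset.sum_le_sum fun A _ => Finset.sum_le_sum fun B _ => ?_
    by_cases hf : fitchOp A B = S
    · rw [if_pos hf, if_pos hf]
      have hmem : (b ∈ A → a ∈ A) ∧ (b ∈ B → a ∈ B) := by
        unfold fitchOp at hf
        by_cases hne : (A ∩ B).Nonempty
        · rw [if_pos hne] at hf
          subst hf
          have := Finset.mem_inter.mp haS
          exact ⟨fun _ => this.1, fun _ => this.2⟩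
        · rw [if_neg hne] at hf
          subst hf
          rw [Finset.mem_union] at hbS
          push_neg at hbS
          exact ⟨fun h => absurd h hbS.1, fun h => absurd h hbS.2⟩
      have e1 : ep p₁ L b A ≤ ep p₁ L a A := ep_le h1 h2 hL (ihL hL) hmem.1
      have e2 : ep p₂ R b B ≤ ep p₂ R a B := ep_le h3 h4 hR (ihR hR) hmem.2
      have n1 : 0 ≤ ep p₁ L b A := ep_nonneg h1 h2 hL b A
      have n2 : 0 ≤ ep p₂ R b B := ep_nonneg h3 h4 hR b B
      exact mul_le_mul e1 e2 n2 (le_trans n1 e1)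
    · rw [if_neg hf, if_neg hf]

end Aux

/-- For any rooted binary phylogenetic tree under `N₄` (not
necessarily ultrametric), `P_{αβγ}(X) ≥ P_{βγδ}(X)`. -/
theorem rootProb4_alphabetagamma_ge_betagammadelta (t : PhyloTree)
    (hn : 2 ≤ t.nLeaves) (hv : t.valid) :
    rootProb4 t 0 {0, 1, 2} ≥ rootProb4 t 0 {1, 2, 3} := by
  have himg : ({0,1,2} : Finset (Fin 4)).image (Equiv.swap (0 : Fin 4) 3) = {1,2,3} := by decide
  have h := rootProb4_perm t (Equiv.swap (0 : Fin 4) 3) 3 {0,1,2}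
  rw [himg, Equiv.swap_apply_right] at h
  rw [ge_iff_le, h]
  exact inv_all t hv {0,1,2} 0 3 (by decide) (by decide)
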